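/- arXiv:1707.00264 — 3 statements merged into one kernel-verified Lean document; each statement's English description precedes it below -/
import Mathlib

section
/- Let k ≥ 0 and let T : (Fin 4)^(k+2) → ℝ be an array with boost order ≤ b with respect to the boost weights w. Then the array S : (Fin 4)^k → ℝ obtained by contracting the last two slots of T with the null-frame metric, S(a₁,…,a_k) = ∑_{c,d} g(c,d) · T(a₁,…,a_k,c,d), also has boost order ≤ b. (Contraction with the metric does not increase boost order, since the only nonvanishing components g(c,d) have w(c)+w(d)=0.) -/
/-- The null-frame metric on a 4-dimensional Lorentzian vector space:
`g 0 1 = g 1 0 = 1`, `g 2 2 = g 3 3 = 1`, all other components vanish. -/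
def gnf : Fin 4 → Fin 4 → ℝ := fun a b =>
  if (a = 0 ∧ b = 1) ∨ (a = 1 ∧ b = 0) ∨ (a = 2 ∧ b = 2) ∨ (a = 3 ∧ b = 3) then 1 else 0

/-- Boost weights of the null-frame indices: `w 0 = 1`, `w 1 = -1`, `w 2 = w 3 = 0`. -/
def bw : Fin 4 → ℤ := ![1, -1, 0, 0]

lemma bw_sum_snoc {n : ℕ} (f : Fin n → Fin 4) (x : Fin 4) :
    (∑ i : Fin (n+1), bw ((Fin.snoc f x : Fin (n+1) → Fin 4) i)) = (∑ i, bw (f i)) + bw x := by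
  rw [Fin.sum_univ_castSucc]
  simp

/-- Contracting the last two slots of a `(k+2)`-index array with the null-frame
metric does not increase the boost order. -/
theorem boostOrder_metric_contraction (k : ℕ) (b : ℤ)
    (T : (Fin (k + 2) → Fin 4) → ℝ)
    (hT : ∀ a : Fin (k + 2) → Fin 4, (∑ i, bw (a i)) > b → T a = 0)
    (a : Fin k → Fin 4) (ha : (∑ i, bw (a i)) > b) :
    (∑ c, ∑ d, gnf c d * T (Fin.snoc (Fin.snoc a c) d)) = 0 := by
  apply Finset.sum_eq_zero
  intro c _
  apply Finset.sum_eq_zero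
  intro d _
  by_cases h : (c = 0 ∧ d = 1) ∨ (c = 1 ∧ d = 0) ∨ (c = 2 ∧ d = 2) ∨ (c = 3 ∧ d = 3)
  · have hz : bw c + bw d = 0 := by
      rcases h with ⟨rfl, rfl⟩ | ⟨rfl, rfl⟩ | ⟨rfl, rfl⟩ | ⟨rfl, rfl⟩ <;> decide
    have : T (Fin.snoc (Fin.snoc a c) d) = 0 := by
      apply hT
      rw [bw_sum_snoc, bw_sum_snoc]
      omega
    simp [this]
  · simp [gnf, h]
end

section
/- Let k ≥ 1 and let T : (Fin 4)^(2k) → ℝ be an array with boost order ≤ −1 with respect to the boost weights w. Then the complete contraction of T with the null-frame metric vanishes: ∑ over all index assignments a : Fin (2k) → Fin 4 of (∏_{i=0}^{k−1} g(a(2i), a(2i+1))) · T(a(0),…,a(2k−1)) = 0. (Any full scalar contraction of a tensor of negative boost order vanishes; this is the algebraic mechanism behind vanishing of scalar curvature invariants of algebraically special tensors.) -/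
lemma gnf_ne_zero_bw {x y : Fin 4} (h : gnf x y ≠ 0) : bw x + bw y = 0 := by
  unfold gnf at h
  by_cases hc : (x = 0 ∧ y = 1) ∨ (x = 1 ∧ y = 0) ∨ (x = 2 ∧ y = 2) ∨ (x = 3 ∧ y = 3)
  · rcases hc with ⟨rfl, rfl⟩ | ⟨rfl, rfl⟩ | ⟨rfl, rfl⟩ | ⟨rfl, rfl⟩ <;> decide
  · simp [hc] at h

/-- Reindexing `Fin k × Fin 2 ≃ Fin (2*k)` via `(i,j) ↦ 2*i+j`. -/
def pairEquiv (k : ℕ) : Fin k × Fin 2 ≃ Fin (2 * k) where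
  toFun p := ⟨2 * p.1.1 + p.2.1, by have := p.1.isLt; have := p.2.isLt; omega⟩
  invFun j := (⟨j.1 / 2, by have := j.isLt; omega⟩, ⟨j.1 % 2, by omega⟩)
  left_inv p := by
    have := p.2.isLt
    ext <;> simp <;> omega
  right_inv j := by
    ext
    simp
    omega

/-- Any full scalar contraction (with the null-frame metric) of a tensor of
negative boost order vanishes. -/
theorem full_contraction_vanishes (k : ℕ) (hk : 1 ≤ k)
    (T : (Fin (2 * k) → Fin 4) → ℝ)
    (hT : ∀ a : Fin (2 * k) → Fin 4, (∑ i, bw (a i)) > -1 → T a = 0) :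
    (∑ a : Fin (2 * k) → Fin 4,
        (∏ i : Fin k,
          gnf (a ⟨2 * i.1, by have := i.isLt; omega⟩)
              (a ⟨2 * i.1 + 1, by have := i.isLt; omega⟩)) * T a) = 0 := by
  apply Finset.sum_eq_zero
  intro a _
  by_cases hp : (∏ i : Fin k,
      gnf (a ⟨2 * i.1, by have := i.isLt; omega⟩)
          (a ⟨2 * i.1 + 1, by have := i.isLt; omega⟩)) = 0
  · rw [hp, zero_mul]
  · have hfac : ∀ i : Fin k,
        gnf (a ⟨2 * i.1, by have := i.isLt; omega⟩)
            (a ⟨2 * i.1 + 1, by have := i.isLt; omega⟩) ≠ 0 := by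
      intro i hi
      exact hp (Finset.prod_eq_zero (Finset.mem_univ i) hi)
    have hsum : (∑ i, bw (a i)) = 0 := by
      rw [← (pairEquiv k).sum_comp (fun j => bw (a j))]
      rw [Fintype.sum_prod_type]
      have : ∀ i : Fin k, (∑ j : Fin 2, bw (a (pairEquiv k (i, j)))) = 0 := by
        intro i
        rw [Fin.sum_univ_two]
        have h2 := gnf_ne_zero_bw (hfac i)
        have e0 : pairEquiv k (i, 0) = ⟨2 * i.1, by have := i.isLt; omega⟩ := rfl
        have e1 : pairEquiv k (i, 1) = ⟨2 * i.1 + 1, by have := i.isLt; omega⟩ := rfl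
        rw [e0, e1]
        exact h2
      simp [this]
    rw [hT a (by omega), mul_zero]
end

section
/- Let T : (Fin 4)^k → ℝ be an array of boost order ≤ 0 with respect to the boost weights w, and for λ ∈ ℝ define the boosted array (B_λ T)(a₁,…,a_k) = exp(λ · (w(a₁)+…+w(a_k))) · T(a₁,…,a_k) (the action on components of the frame boost ℓ ↦ e^λ ℓ, n ↦ e^{−λ} n, which is a g-isometry). Then as λ → +∞, B_λ T converges (componentwise) to the boost-weight-zero part T₀ of T, defined by T₀(a₁,…,a_k) = T(a₁,…,a_k) if w(a₁)+…+w(a_k) = 0 and T₀(a₁,…,a_k) = 0 otherwise. (This is the limiting procedure by which a type II tensor degenerates to its type D background part.) -/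
open Filter

/-- For an array `T` of boost order `≤ 0`, the boosted array
`(B_λ T)(a) = exp(λ · w(a)) · T(a)` converges componentwise, as `λ → +∞`,
to the boost-weight-zero part of `T`. -/
theorem boost_limit_to_bw_zero_part (k : ℕ) (T : (Fin k → Fin 4) → ℝ)
    (hT : ∀ a : Fin k → Fin 4, (∑ i, bw (a i)) > 0 → T a = 0)
    (a : Fin k → Fin 4) :
    Tendsto (fun lam : ℝ => Real.exp (lam * ((∑ i, bw (a i) : ℤ) : ℝ)) * T a)
      atTop (nhds (if (∑ i, bw (a i)) = 0 then T a else 0)) := by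
  set s : ℤ := ∑ i, bw (a i) with hs
  rcases lt_trichotomy s 0 with h | h | h
  · -- s < 0 : exp term → 0
    rw [if_neg h.ne]
    have : Tendsto (fun lam : ℝ => Real.exp (lam * (s : ℝ))) atTop (nhds 0) := by
      have hneg : (s : ℝ) < 0 := by exact_mod_cast h
      have h2 : Tendsto (fun lam : ℝ => lam * (s : ℝ)) atTop atBot :=
        tendsto_id.atTop_mul_const_of_neg hneg
      exact Real.tendsto_exp_atBot.comp h2
    simpa using this.mul_const (T a)
  · rw [if_pos h]
    have : (fun lam : ℝ => Real.exp (lam * (s : ℝ)) * T a) = fun _ => T a := by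
      funext lam; simp [h]
    rw [this]; exact tendsto_const_nhds
  · rw [if_neg h.ne', hT a h]
    simp
end
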